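/- Let U be a free (nonprincipal) ultrafilter on ℕ. Then there is no sequence (μ_n)_{n∈ℕ} of Borel probability measures on ℝ with the property that for every bounded continuous f : ℝ → ℝ and every L ∈ ℝ, if the sequence k ↦ f(k) tends to L along U then ∫ f dμ_n → L as n → ∞. -/

import Mathlib

open MeasureTheory Filter Topology Metric Set

noncomputable section

/-- Bump function: 1 at naturals in `A`, 0 at naturals outside `A`. -/
def bumpF (A : Set ℕ) : ℝ → ℝ := fun x => max 0 (1 - 2 * infDist x ((↑) '' A : Set ℝ))

lemma bumpF_continuous (A : Set ℕ) : Continuous (bumpF A) :=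
  continuous_const.max (continuous_const.sub
    (continuous_const.mul (continuous_infDist_pt _)))

lemma bumpF_nonneg (A : Set ℕ) (x : ℝ) : 0 ≤ bumpF A x := le_max_left _ _

lemma bumpF_le_one (A : Set ℕ) (x : ℝ) : bumpF A x ≤ 1 := by
  have h : (0:ℝ) ≤ infDist x ((↑) '' A : Set ℝ) := infDist_nonneg
  simp only [bumpF, max_le_iff]
  constructor <;> linarith

lemma bumpF_abs_le_one (A : Set ℕ) (x : ℝ) : |bumpF A x| ≤ 1 := by
  rw [abs_le]; exact ⟨by linarith [bumpF_nonneg A x], bumpF_le_one A x⟩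

lemma bumpF_of_mem {A : Set ℕ} {k : ℕ} (h : k ∈ A) : bumpF A k = 1 := by
  have : infDist (k:ℝ) ((↑) '' A : Set ℝ) = 0 :=
    infDist_zero_of_mem ⟨k, h, rfl⟩
  simp [bumpF, this]

lemma nat_dist_ge {k a : ℕ} (h : k ≠ a) : (1:ℝ) ≤ dist (k:ℝ) (a:ℝ) := by
  rw [Real.dist_eq]
  have h1 : (1:ℤ) ≤ |(k:ℤ) - a| := by
    rcases lt_or_gt_of_ne h with h' | h'
    · rw [abs_sub_comm, abs_of_nonneg (by omega)]; omega
    · rw [abs_of_nonneg (by omega)]; omega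
  calc (1:ℝ) ≤ |((k:ℤ) - a : ℤ)| := by exact_mod_cast h1
    _ = |(k:ℝ) - a| := by push_cast; rfl

lemma bumpF_eq_zero_of_far {A : Set ℕ} (hA : A.Nonempty) {x : ℝ}
    (h : ∀ k ∈ A, (1:ℝ) ≤ dist x (k:ℝ)) : bumpF A x = 0 := by
  have hne : ((↑) '' A : Set ℝ).Nonempty := hA.image _
  have hd : (1:ℝ) ≤ infDist x ((↑) '' A : Set ℝ) := by
    by_contra hlt
    push_neg at hlt
    obtain ⟨y, ⟨a, ha, rfl⟩, hy⟩ := (infDist_lt_iff hne).1 hlt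
    exact absurd (h a ha) (not_le.2 hy)
  have h2 : (1:ℝ) - 2 * infDist x ((↑) '' A : Set ℝ) ≤ 0 := by linarith
  simp [bumpF, max_eq_left h2]

lemma bumpF_of_not_mem {A : Set ℕ} (hA : A.Nonempty) {k : ℕ} (h : k ∉ A) :
    bumpF A k = 0 :=
  bumpF_eq_zero_of_far hA fun a ha => nat_dist_ge (fun e => h (e ▸ ha))

lemma bumpF_mono {A B : Set ℕ} (hA : A.Nonempty) (h : A ⊆ B) (x : ℝ) :
    bumpF A x ≤ bumpF B x := by
  have hle : infDist x ((↑) '' B : Set ℝ) ≤ infDist x ((↑) '' A : Set ℝ) :=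
    infDist_le_infDist_of_subset (image_mono h) (hA.image _)
  exact max_le_max le_rfl (by linarith)

lemma bumpF_pos_imp {A : Set ℕ} (hA : A.Nonempty) {x : ℝ} (h : 0 < bumpF A x) :
    ∃ a ∈ A, dist x (a:ℝ) < 1/2 := by
  have hd : infDist x ((↑) '' A : Set ℝ) < 1/2 := by
    by_contra hge
    push_neg at hge
    have : (1:ℝ) - 2 * infDist x ((↑) '' A : Set ℝ) ≤ 0 := by linarith
    simp [bumpF, max_eq_left this] at h
  obtain ⟨y, ⟨a, ha, rfl⟩, hy⟩ := (infDist_lt_iff (hA.image _)).1 hd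
  exact ⟨a, ha, hy⟩

lemma bumpF_union_eq_max {A B : Set ℕ} (hA : A.Nonempty) (hB : B.Nonempty) (x : ℝ) :
    bumpF (A ∪ B) x = max (bumpF A x) (bumpF B x) := by
  have hmin : infDist x ((↑) '' (A ∪ B) : Set ℝ)
      = min (infDist x ((↑) '' A : Set ℝ)) (infDist x ((↑) '' B : Set ℝ)) := by
    rw [image_union]
    unfold infDist
    rw [EMetric.infEdist_union, ENNReal.toReal_min (infEdist_ne_top (hA.image _))
      (infEdist_ne_top (hB.image _))]
  have hanti : Antitone (fun d : ℝ => max 0 (1 - 2 * d)) := by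
    intro a b hab
    exact max_le_max le_rfl (by linarith)
  simp only [bumpF, hmin]
  exact hanti.map_min

lemma bumpF_union_add {A B : Set ℕ} (hA : A.Nonempty) (hB : B.Nonempty)
    (hd : Disjoint A B) (x : ℝ) : bumpF (A ∪ B) x = bumpF A x + bumpF B x := by
  rw [bumpF_union_eq_max hA hB]
  have hzero : bumpF A x = 0 ∨ bumpF B x = 0 := by
    by_contra hc
    push_neg at hc
    have hA' : 0 < bumpF A x := lt_of_le_of_ne (bumpF_nonneg A x) (Ne.symm hc.1)
    have hB' : 0 < bumpF B x := lt_of_le_of_ne (bumpF_nonneg B x) (Ne.symm hc.2)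
    obtain ⟨a, ha, hda⟩ := bumpF_pos_imp hA hA'
    obtain ⟨b, hb, hdb⟩ := bumpF_pos_imp hB hB'
    have hab : a ≠ b := fun e => (hd.ne_of_mem ha hb) e
    have : dist (a:ℝ) (b:ℝ) < 1 := by
      calc dist (a:ℝ) (b:ℝ) ≤ dist (a:ℝ) x + dist x (b:ℝ) := dist_triangle _ _ _
        _ < 1 := by rw [dist_comm (a:ℝ) x]; linarith
    exact absurd (nat_dist_ge hab) (not_le.2 this)
  rcases hzero with h0 | h0 <;> rw [h0]
  · rw [max_eq_right (bumpF_nonneg B x), zero_add]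
  · rw [max_eq_left (bumpF_nonneg A x), add_zero]

end

open Filter

/-- Example 5.11, Laczkovich: For a free ultrafilter `U` on `ℕ`, there is no
sequence of Borel probability measures `μ n` on `ℝ` such that `∫ f dμ n → L` whenever
`k ↦ f k` tends to `L` along `U`, for every bounded continuous `f : ℝ → ℝ`. -/
theorem no_weak_limit_to_ultrafilter_charge_on_real_line
    (U : Ultrafilter ℕ) (hU : (U : Filter ℕ) ≤ Filter.cofinite) :
    ¬ ∃ μ : ℕ → Measure ℝ,
        (∀ n, IsProbabilityMeasure (μ n)) ∧
        (∀ f : ℝ → ℝ, Continuous f → (∃ C : ℝ, ∀ x, |f x| ≤ C) →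
          ∀ L : ℝ, Tendsto (fun k : ℕ => f k) (U : Filter ℕ) (𝓝 L) →
            Tendsto (fun n => ∫ x, f x ∂(μ n)) atTop (𝓝 L)) := by
  rintro ⟨μ, hprob, hconv⟩
  have hint : ∀ (n : ℕ) (A : Set ℕ), Integrable (bumpF A) (μ n) := by
    intro n A
    haveI := hprob n
    exact ⟨(bumpF_continuous A).aestronglyMeasurable,
      HasFiniteIntegral.of_bounded (C := 1) (ae_of_all _ fun x => by
        rw [Real.norm_eq_abs]; exact bumpF_abs_le_one A x)⟩
  set I : ℕ → Set ℕ → ℝ := fun n A => ∫ x, bumpF A x ∂(μ n) with hIdef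
  have I_mono : ∀ (n : ℕ) {A B : Set ℕ}, A.Nonempty → A ⊆ B → I n A ≤ I n B := by
    intro n A B hA hAB
    exact integral_mono (hint n A) (hint n B) (bumpF_mono hA hAB)
  have I_add : ∀ (n : ℕ) {A B : Set ℕ}, A.Nonempty → B.Nonempty → Disjoint A B →
      I n (A ∪ B) = I n A + I n B := by
    intro n A B hA hB hd
    have : bumpF (A ∪ B) = fun x => bumpF A x + bumpF B x :=
      funext (bumpF_union_add hA hB hd)
    simp only [hIdef, this]
    exact integral_add (hint n A) (hint n B)
  -- limits along the sequence of measures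
  have hUniv : Tendsto (fun n => I n Set.univ) atTop (𝓝 1) := by
    refine hconv _ (bumpF_continuous _) ⟨1, bumpF_abs_le_one _⟩ 1 ?_
    have : (fun k : ℕ => bumpF Set.univ k) = fun _ => (1:ℝ) :=
      funext fun k => bumpF_of_mem trivial
    rw [this]; exact tendsto_const_nhds
  have hNotMem : ∀ A : Set ℕ, A.Nonempty → A ∉ U →
      Tendsto (fun n => I n A) atTop (𝓝 0) := by
    intro A hA hAU
    refine hconv _ (bumpF_continuous _) ⟨1, bumpF_abs_le_one _⟩ 0 ?_
    have hc : Aᶜ ∈ U := Ultrafilter.compl_mem_iff_notMem.2 hAU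
    have hev : (fun k : ℕ => bumpF A k) =ᶠ[(U : Filter ℕ)] fun _ => (0:ℝ) :=
      Filter.eventually_iff.2 (Filter.mem_of_superset hc fun k hk =>
        bumpF_of_not_mem hA hk)
    exact Tendsto.congr' hev.symm tendsto_const_nhds
  have hMem : ∀ A : Set ℕ, A ∈ U → Tendsto (fun n => I n A) atTop (𝓝 1) := by
    intro A hAU
    refine hconv _ (bumpF_continuous _) ⟨1, bumpF_abs_le_one _⟩ 1 ?_
    have hev : (fun k : ℕ => bumpF A k) =ᶠ[(U : Filter ℕ)] fun _ => (1:ℝ) :=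
      Filter.eventually_iff.2 (Filter.mem_of_superset hAU fun k hk =>
        bumpF_of_mem hk)
    exact Tendsto.congr' hev.symm tendsto_const_nhds
  -- the basic sets
  have low_ne : ∀ m : ℕ, ({k : ℕ | k ≤ m}).Nonempty := fun m => ⟨0, Nat.zero_le m⟩
  have tail_ne : ∀ m : ℕ, ({k : ℕ | m < k}).Nonempty := fun m => ⟨m + 1, Nat.lt_succ_self m⟩
  have low_notU : ∀ m : ℕ, {k : ℕ | k ≤ m} ∉ U := by
    intro m hm
    have hfin : ({k : ℕ | k ≤ m}).Finite := Set.finite_Iic m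
    have hcc : ({k : ℕ | k ≤ m})ᶜ ∈ (U : Filter ℕ) := hU hfin.compl_mem_cofinite
    exact absurd hm (Ultrafilter.compl_mem_iff_notMem.1 hcc)
  have hLow : ∀ m : ℕ, Tendsto (fun n => I n {k : ℕ | k ≤ m}) atTop (𝓝 0) :=
    fun m => hNotMem _ (low_ne m) (low_notU m)
  -- tails of a fixed measure go to 0
  have hTail : ∀ n : ℕ, Tendsto (fun m => I n {k : ℕ | m < k}) atTop (𝓝 0) := by
    intro n
    haveI := hprob n
    have h := tendsto_integral_of_dominated_convergence (μ := μ n)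
      (F := fun m x => bumpF {k : ℕ | m < k} x) (f := fun _ => (0:ℝ))
      (bound := fun _ => (1:ℝ))
      (fun m => (bumpF_continuous _).aestronglyMeasurable)
      (integrable_const 1)
      (fun m => ae_of_all _ fun x => by
        rw [Real.norm_eq_abs]; exact bumpF_abs_le_one _ x)
      (ae_of_all _ fun x => ?_)
    · simpa using h
    · have hev : (fun m => bumpF {k : ℕ | m < k} x) =ᶠ[atTop] fun _ => (0:ℝ) := by
        filter_upwards [eventually_ge_atTop ⌈x⌉₊] with m hm
        refine bumpF_eq_zero_of_far (tail_ne m) fun k hk => ?_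
        have hk' : (m:ℝ) + 1 ≤ (k:ℝ) := by exact_mod_cast Nat.succ_le_of_lt hk
        have hxm : x ≤ (m:ℝ) := le_trans (Nat.le_ceil x) (by exact_mod_cast hm)
        rw [Real.dist_eq, abs_sub_comm]
        calc (1:ℝ) ≤ (k:ℝ) - x := by linarith
          _ ≤ |(k:ℝ) - x| := le_abs_self _
      exact Tendsto.congr' hev.symm tendsto_const_nhds
  -- one step of the construction
  have hpick : ∀ N m : ℕ, ∃ p : ℕ × ℕ, N < p.1 ∧ m < p.2 ∧
      7/8 ≤ I p.1 Set.univ ∧ I p.1 {k : ℕ | k ≤ m} ≤ 1/8 ∧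
      I p.1 {k : ℕ | p.2 < k} ≤ 1/8 := by
    intro N m
    have h1 : ∀ᶠ n in atTop, 7/8 ≤ I n Set.univ :=
      hUniv.eventually (eventually_ge_nhds (by norm_num))
    have h2 : ∀ᶠ n in atTop, I n {k : ℕ | k ≤ m} ≤ 1/8 :=
      (hLow m).eventually (eventually_le_nhds (by norm_num))
    obtain ⟨n, hn1, hn2, hn3⟩ := ((eventually_gt_atTop N).and (h1.and h2)).exists
    have h3 : ∀ᶠ m' in atTop, I n {k : ℕ | m' < k} ≤ 1/8 :=
      (hTail n).eventually (eventually_le_nhds (by norm_num))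
    obtain ⟨m', hm1, hm2⟩ := ((eventually_gt_atTop m).and h3).exists
    exact ⟨(n, m'), hn1, hm1, hn2, hn3, hm2⟩
  choose g hg1 hg2 hg3 hg4 hg5 using hpick
  -- the recursive sequences
  let q : ℕ → ℕ × ℕ := fun i => Nat.rec (g 0 0) (fun _ p => g p.1 p.2) i
  let nn : ℕ → ℕ := fun i => (q i).1
  let mm : ℕ → ℕ := fun i => (q i).2
  let pn : ℕ → ℕ := fun i => match i with | 0 => 0 | j+1 => nn j
  let pm : ℕ → ℕ := fun i => match i with | 0 => 0 | j+1 => mm j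
  have hq : ∀ i, q i = g (pn i) (pm i) := by
    intro i
    cases i with
    | zero => rfl
    | succ j => rfl
  have key : ∀ i, pn i < nn i ∧ pm i < mm i ∧ 7/8 ≤ I (nn i) Set.univ ∧
      I (nn i) {k : ℕ | k ≤ pm i} ≤ 1/8 ∧ I (nn i) {k : ℕ | mm i < k} ≤ 1/8 := by
    intro i
    have h1 := hg1 (pn i) (pm i)
    have h2 := hg2 (pn i) (pm i)
    have h3 := hg3 (pn i) (pm i)
    have h4 := hg4 (pn i) (pm i)
    have h5 := hg5 (pn i) (pm i)
    rw [← hq i] at h1 h2 h3 h4 h5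
    exact ⟨h1, h2, h3, h4, h5⟩
  have nn_mono : StrictMono nn := strictMono_nat_of_lt_succ fun i => (key (i+1)).1
  have mm_mono : StrictMono mm := strictMono_nat_of_lt_succ fun i => (key (i+1)).2.1
  -- the blocks
  let B : ℕ → Set ℕ := fun i => {k : ℕ | pm i < k ∧ k ≤ mm i}
  have B_ne : ∀ i, (B i).Nonempty := fun i => ⟨mm i, (key i).2.1, le_rfl⟩
  have hBmem : ∀ i k, k ∈ B i ↔ pm i < k ∧ k ≤ mm i := fun _ _ => Iff.rfl
  -- lower bound on each block
  have block_lb : ∀ i, 5/8 ≤ I (nn i) (B i) := by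
    intro i
    have hdec1 : Set.univ = {k : ℕ | k ≤ pm i} ∪ {k : ℕ | pm i < k} := by
      ext k; simp only [Set.mem_univ, Set.mem_union, Set.mem_setOf_eq, true_iff]; omega
    have hdisj1 : Disjoint {k : ℕ | k ≤ pm i} {k : ℕ | pm i < k} := by
      rw [Set.disjoint_left]; intro k hk hk'; simp only [Set.mem_setOf_eq] at hk hk'; omega
    have hdec2 : {k : ℕ | pm i < k} = B i ∪ {k : ℕ | mm i < k} := by
      have := (key i).2.1
      ext k; simp only [Set.mem_union, Set.mem_setOf_eq, hBmem]; omega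
    have hdisj2 : Disjoint (B i) {k : ℕ | mm i < k} := by
      rw [Set.disjoint_left]; intro k hk hk'
      have hk1 := (hBmem i k).1 hk
      have hk2 : mm i < k := hk'
      omega
    have e1 : I (nn i) Set.univ
        = I (nn i) {k : ℕ | k ≤ pm i} + I (nn i) {k : ℕ | pm i < k} := by
      rw [hdec1]; exact I_add _ (low_ne _) (tail_ne _) hdisj1
    have e2 : I (nn i) {k : ℕ | pm i < k}
        = I (nn i) (B i) + I (nn i) {k : ℕ | mm i < k} := by
      rw [hdec2]; exact I_add _ (B_ne i) (tail_ne _) hdisj2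
    have := (key i).2.2.1
    have := (key i).2.2.2.1
    have := (key i).2.2.2.2
    linarith
  -- the set A
  let A : Set ℕ := ⋃ i, B (2 * i)
  have A_ne : A.Nonempty :=
    ⟨mm 0, Set.mem_iUnion.2 ⟨0, show pm 0 < mm 0 ∧ mm 0 ≤ mm 0 from ⟨(key 0).2.1, le_rfl⟩⟩⟩
  -- even steps: lower bound
  have even_lb : ∀ i, 5/8 ≤ I (nn (2 * i)) A := by
    intro i
    refine le_trans (block_lb (2 * i)) (I_mono _ (B_ne _) ?_)
    exact Set.subset_iUnion (fun j => B (2 * j)) i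
  -- odd steps: upper bound
  have odd_ub : ∀ i, I (nn (2 * i + 1)) A ≤ 1/4 := by
    intro i
    have hsub : A ⊆ {k : ℕ | k ≤ pm (2 * i + 1)} ∪ {k : ℕ | mm (2 * i + 1) < k} := by
      intro k hk
      obtain ⟨j, hkj⟩ := Set.mem_iUnion.1 hk
      rw [hBmem (2 * j) k] at hkj
      by_cases hji : j ≤ i
      · have hpm : pm (2 * i + 1) = mm (2 * i) := rfl
        have hmono : mm (2 * j) ≤ mm (2 * i) := mm_mono.monotone (show 2 * j ≤ 2 * i by omega)
        exact Set.mem_union_left _ (show k ≤ pm (2 * i + 1) by rw [hpm]; omega)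
      · push_neg at hji
        obtain ⟨j', rfl⟩ : ∃ j', j = j' + 1 := ⟨j - 1, by omega⟩
        have hpm : pm (2 * (j' + 1)) = mm (2 * j' + 1) := rfl
        have hmono : mm (2 * i + 1) ≤ mm (2 * j' + 1) := mm_mono.monotone (show 2 * i + 1 ≤ 2 * j' + 1 by omega)
        have h1 : mm (2 * j' + 1) < k := by rw [← hpm]; exact hkj.1
        exact Set.mem_union_right _
          (show mm (2 * i + 1) < k from lt_of_le_of_lt hmono h1)
    have hdisj : Disjoint {k : ℕ | k ≤ pm (2 * i + 1)} {k : ℕ | mm (2 * i + 1) < k} := by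
      have h1 : pm (2 * i + 1) = mm (2 * i) := rfl
      have h2 : mm (2 * i) ≤ mm (2 * i + 1) := mm_mono.monotone (show 2 * i ≤ 2 * i + 1 by omega)
      rw [Set.disjoint_left]; intro k hk hk'
      have hk1 : k ≤ pm (2 * i + 1) := hk
      have hk2 : mm (2 * i + 1) < k := hk'
      omega
    have e : I (nn (2 * i + 1))
        ({k : ℕ | k ≤ pm (2 * i + 1)} ∪ {k : ℕ | mm (2 * i + 1) < k})
        = I (nn (2 * i + 1)) {k : ℕ | k ≤ pm (2 * i + 1)}
          + I (nn (2 * i + 1)) {k : ℕ | mm (2 * i + 1) < k} :=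
      I_add _ (low_ne _) (tail_ne _) hdisj
    have hle := I_mono (nn (2 * i + 1)) A_ne hsub
    have h4 := (key (2 * i + 1)).2.2.2.1
    have h5 := (key (2 * i + 1)).2.2.2.2
    linarith
  -- the limit of I n A exists
  obtain ⟨L, hL⟩ : ∃ L : ℝ, Tendsto (fun n => I n A) atTop (𝓝 L) := by
    by_cases hAU : A ∈ U
    · exact ⟨1, hMem A hAU⟩
    · exact ⟨0, hNotMem A A_ne hAU⟩
  have sm_even : StrictMono (fun i => nn (2 * i)) :=
    fun a b h => nn_mono (show 2 * a < 2 * b by omega)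
  have sm_odd : StrictMono (fun i => nn (2 * i + 1)) :=
    fun a b h => nn_mono (show 2 * a + 1 < 2 * b + 1 by omega)
  have hLe : Tendsto (fun i => I (nn (2 * i)) A) atTop (𝓝 L) :=
    hL.comp sm_even.tendsto_atTop
  have hLo : Tendsto (fun i => I (nn (2 * i + 1)) A) atTop (𝓝 L) :=
    hL.comp sm_odd.tendsto_atTop
  have h58 : 5/8 ≤ L := ge_of_tendsto' hLe even_lb
  have h14 : L ≤ 1/4 := le_of_tendsto' hLo odd_ub
  linarith
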